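/- Let S be a nonempty finite set, K ∈ ℕ with K ≥ 1, C ≥ 1, B ≥ 0, and ε ≥ 0. Let ρ, q_1, …, q_K be probability distributions on S satisfying the coverability condition q_k(s) ≤ C·ρ(s) for all k ∈ [K] and s ∈ S. Let δ_1, …, δ_K : S → [−B, B] be functions such that for every k ∈ {2, …, K}, (1/(k−1))·Σ_{ℓ=1}^{k−1} Σ_{s∈S} q_ℓ(s)·δ_k(s)² ≤ ε². Then min_{k∈[K]} Σ_{s∈S} q_k(s)·δ_k(s) ≤ ε·√(2C·ln K) + 2CB/K. -/

import Mathlib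

open scoped BigOperators


open Finset

private lemma bad_mass (n : ℕ) (v : ℕ → ℝ) (hv : ∀ i, 0 ≤ v i) (c : ℝ) (hc : 0 ≤ c)
    (hvc : ∀ i, v i ≤ c) :
    ∑ i ∈ range n, (if c < ∑ j ∈ range i, v j then 0 else v i) ≤ 2 * c := by
  classical
  rw [Finset.sum_ite, Finset.sum_const_zero, zero_add]
  set T := (range n).filter (fun i => ¬ c < ∑ j ∈ range i, v j) with hT
  rcases T.eq_empty_or_nonempty with h | h
  · rw [h, Finset.sum_empty]; linarith
  · set m := T.max' h with hm
    have hmT : m ∈ T := T.max'_mem h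
    have hPm : ∑ j ∈ range m, v j ≤ c := by
      have := (Finset.mem_filter.mp hmT).2
      exact not_lt.mp this
    have hsub : T ⊆ range (m + 1) := by
      intro i hi
      exact Finset.mem_range.mpr (Nat.lt_succ_of_le (T.le_max' i hi))
    calc ∑ i ∈ T, v i ≤ ∑ i ∈ range (m + 1), v i :=
          Finset.sum_le_sum_of_subset_of_nonneg hsub (fun i _ _ => hv i)
      _ = (∑ j ∈ range m, v j) + v m := Finset.sum_range_succ _ _
      _ ≤ c + c := add_le_add hPm (hvc m)
      _ = 2 * c := by ring

private lemma log_mass (n : ℕ) (hn : 1 ≤ n) (v : ℕ → ℝ) (hv : ∀ i, 0 ≤ v i) (c : ℝ)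
    (hc : 0 < c) (hvc : ∀ i, v i ≤ c) :
    ∑ i ∈ range n, (if c < ∑ j ∈ range i, v j then (v i) ^ 2 / (∑ j ∈ range i, v j) else 0)
      ≤ 2 * c * Real.log n := by
  classical
  set P : ℕ → ℝ := fun i => ∑ j ∈ range i, v j with hP
  set L : ℕ → ℝ := fun i => Real.log (max (P i) c) with hL
  have hPmono : Monotone P := by
    intro a b hab
    exact Finset.sum_le_sum_of_subset_of_nonneg (Finset.range_subset_range.mpr hab) (fun i _ _ => hv i)
  have hPsucc : ∀ i, P (i + 1) = P i + v i := fun i => Finset.sum_range_succ _ _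
  have key : ∀ i ∈ range n, (if c < P i then (v i) ^ 2 / P i else 0) ≤ 2 * c * (L (i+1) - L i) := by
    intro i _
    by_cases hgood : c < P i
    · rw [if_pos hgood]
      have hPpos : 0 < P i := lt_trans hc hgood
      have hvP : v i ≤ P i := le_trans (hvc i) (le_of_lt hgood)
      have hP1 : P (i+1) = P i + v i := hPsucc i
      have hvi := hv i
      have hpv : 0 < P i + v i := by linarith
      have hL1 : L (i+1) = Real.log (P i + v i) := by
        rw [hL]; simp only [hP1]
        rw [max_eq_left (by linarith)]
      have hL0 : L i = Real.log (P i) := by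
        rw [hL]; simp only; rw [max_eq_left (le_of_lt hgood)]
      rw [hL1, hL0]
      -- log (P + v) - log P ≥ v / (2 P)
      have hfrac : v i / (P i + v i) ≤ Real.log (P i + v i) - Real.log (P i) := by
        have hx : (0:ℝ) < P i / (P i + v i) := div_pos hPpos hpv
        have h1 := Real.log_le_sub_one_of_pos hx
        rw [Real.log_div (ne_of_gt hPpos) (ne_of_gt hpv)] at h1
        have h2 : P i / (P i + v i) - 1 = - (v i / (P i + v i)) := by
          field_simp
          ring
        rw [h2] at h1; linarith
      have hhalf : v i / (2 * P i) ≤ v i / (P i + v i) := by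
        apply div_le_div_of_nonneg_left (hv i) hpv (by linarith)
      have hlogdiff : v i / (2 * P i) ≤ Real.log (P i + v i) - Real.log (P i) := le_trans hhalf hfrac
      have : (v i) ^ 2 / P i ≤ c * (v i / P i) := by
        rw [pow_two, mul_div_assoc]
        apply mul_le_mul_of_nonneg_right (hvc i) (div_nonneg hvi (le_of_lt hPpos))
      calc (v i) ^ 2 / P i ≤ c * (v i / P i) := this
        _ = 2 * c * (v i / (2 * P i)) := by
            field_simp
        _ ≤ 2 * c * (Real.log (P i + v i) - Real.log (P i)) := by
            apply mul_le_mul_of_nonneg_left hlogdiff (by linarith)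
    · rw [if_neg hgood]
      have hLmono : L i ≤ L (i + 1) := by
        apply Real.log_le_log (lt_of_lt_of_le hc (le_max_right _ _))
        exact max_le_max (hPmono (Nat.le_succ i)) le_rfl
      have := hLmono
      nlinarith
  calc ∑ i ∈ range n, (if c < P i then (v i) ^ 2 / P i else 0)
      ≤ ∑ i ∈ range n, 2 * c * (L (i+1) - L i) := Finset.sum_le_sum key
    _ = 2 * c * (L n - L 0) := by rw [← Finset.mul_sum, Finset.sum_range_sub]
    _ ≤ 2 * c * Real.log n := by
        apply mul_le_mul_of_nonneg_left _ (by positivity)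
        have hL0 : L 0 = Real.log c := by
          rw [hL]; simp only [hP]; rw [Finset.range_zero, Finset.sum_empty, max_eq_right (le_of_lt hc)]
        have hPn : P n ≤ n * c := by
          calc P n ≤ ∑ _j ∈ range n, c := Finset.sum_le_sum (fun j _ => hvc j)
            _ = n * c := by rw [Finset.sum_const, Finset.card_range, nsmul_eq_mul]
        have hn1 : (1:ℝ) ≤ (n:ℝ) := by exact_mod_cast hn
        have hLn : L n ≤ Real.log ((n:ℝ) * c) := by
          apply Real.log_le_log (lt_of_lt_of_le hc (le_max_right _ _))
          apply max_le hPn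
          nlinarith
        rw [hL0]
        have hne : ((n:ℝ)) ≠ 0 := by positivity
        have hlm : Real.log ((n:ℝ) * c) = Real.log n + Real.log c :=
          Real.log_mul hne (ne_of_gt hc)
        linarith

/-- (Distribution-shift / pigeonhole lemma.)  Let `S` be a nonempty finite
set and `ρ, q 0, …, q (K-1)` probability distributions on `S` with `q k s ≤ C * ρ s`
(coverability with constant `C ≥ 1`).  If functions `δ k : S → [-B, B]` satisfy the
averaged on-policy guarantee
`(1/k') * Σ_{ℓ < k} Σ_s q ℓ s * (δ k s)² ≤ ε²` for every `k` with at least one predecessor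
(`k'` being the number of predecessors), then
`min_k Σ_s q k s * δ k s ≤ ε √(2 C ln K) + 2 C B / K`. -/
theorem stmt_6 {S : Type*} [Fintype S] [Nonempty S] (K : ℕ) (hK : 1 ≤ K)
    (C B ε : ℝ) (hC : 1 ≤ C) (hB : 0 ≤ B) (hε : 0 ≤ ε)
    (ρ : S → ℝ) (hρ : (∀ s, 0 ≤ ρ s) ∧ ∑ s, ρ s = 1)
    (q : Fin K → S → ℝ) (hq : ∀ k, (∀ s, 0 ≤ q k s) ∧ ∑ s, q k s = 1)
    (hcover : ∀ k s, q k s ≤ C * ρ s)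
    (δ : Fin K → S → ℝ) (hδ : ∀ k s, |δ k s| ≤ B)
    (havg : ∀ k : Fin K, 1 ≤ (k : ℕ) →
      (1 / (k : ℝ)) * ∑ ℓ ∈ Finset.Iio k, ∑ s, q ℓ s * (δ k s) ^ 2 ≤ ε ^ 2) :
    (⨅ k : Fin K, ∑ s, q k s * δ k s) ≤
      ε * Real.sqrt (2 * C * Real.log K) + 2 * C * B / K := by
  classical
  haveI : NeZero K := ⟨by omega⟩
  have hKpos : (0:ℝ) < (K:ℝ) := by exact_mod_cast Nat.lt_of_lt_of_le Nat.zero_lt_one hK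
  set X : Fin K → ℝ := fun k => ∑ s, q k s * δ k s with hXdef
  set P : Fin K → S → ℝ := fun k s => ∑ ℓ ∈ Finset.Iio k, q ℓ s with hPdef
  set vq : ℕ → S → ℝ := fun i s => if h : i < K then q ⟨i, h⟩ s else 0 with hvqdef
  have hvq0 : ∀ i s, 0 ≤ vq i s := by
    intro i s; simp only [hvqdef]; split
    · exact (hq _).1 s
    · exact le_refl 0
  have hvqc : ∀ i s, vq i s ≤ C * ρ s := by
    intro i s; simp only [hvqdef]; split
    · exact hcover _ s
    · exact mul_nonneg (by linarith) (hρ.1 s)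
  have hvq_eq : ∀ (k : Fin K) (s : S), vq (k : ℕ) s = q k s := by
    intro k s; simp only [hvqdef]; rw [dif_pos k.isLt]
  have hc0 : ∀ s, 0 ≤ C * ρ s := fun s => mul_nonneg (by linarith) (hρ.1 s)
  have hP0 : ∀ (k : Fin K) (s : S), 0 ≤ P k s := by
    intro k s; simp only [hPdef]
    exact Finset.sum_nonneg fun ℓ _ => (hq ℓ).1 s
  have hPeq : ∀ (k : Fin K) (s : S), P k s = ∑ j ∈ Finset.range (k : ℕ), vq j s := by
    intro k s
    have hkK := k.isLt
    have h1 : P k s = ∑ ℓ ∈ Finset.univ.filter (fun ℓ : Fin K => (ℓ:ℕ) < (k:ℕ)), vq (ℓ:ℕ) s := by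
      simp only [hPdef]
      apply Finset.sum_congr
      · ext ℓ
        simp only [Finset.mem_Iio, Finset.mem_filter, Finset.mem_univ, true_and, Fin.lt_def]
      · intro ℓ _; exact (hvq_eq ℓ s).symm
    rw [h1, Finset.sum_filter]
    rw [Fin.sum_univ_eq_sum_range (fun i => if i < (k:ℕ) then vq i s else 0) K]
    rw [← Finset.sum_filter]
    congr 1
    ext i; simp only [Finset.mem_filter, Finset.mem_range]
    constructor
    · rintro ⟨_, h⟩; exact h
    · intro h; exact ⟨lt_trans h hkK, h⟩
  -- step 1 : inf ≤ average
  have hinf : (⨅ k : Fin K, X k) ≤ (∑ k : Fin K, X k) / K := by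
    rw [le_div_iff₀ hKpos]
    have hle : ∀ k : Fin K, (⨅ j : Fin K, X j) ≤ X k := fun k =>
      ciInf_le ((Set.finite_range X).bddBelow) k
    calc (⨅ j : Fin K, X j) * K = ∑ _k : Fin K, (⨅ j : Fin K, X j) := by
          rw [Finset.sum_const, Finset.card_univ, Fintype.card_fin, nsmul_eq_mul]; ring
      _ ≤ ∑ k : Fin K, X k := Finset.sum_le_sum fun k _ => hle k
  -- definitions of the pieces
  set Bd : Fin K → ℝ := fun k => ∑ s, if C * ρ s < P k s then 0 else q k s with hBddef
  set Gd : Fin K → ℝ := fun k => ∑ s, if C * ρ s < P k s then q k s * |δ k s| else 0 with hGddef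
  set A : Fin K → ℝ := fun k => ∑ s, if C * ρ s < P k s then q k s ^ 2 / P k s else 0 with hAdef
  set W : Fin K → ℝ := fun k => ∑ s, P k s * δ k s ^ 2 with hWdef
  have hA0 : ∀ k, 0 ≤ A k := by
    intro k; simp only [hAdef]
    apply Finset.sum_nonneg
    intro s _
    split
    · apply div_nonneg (sq_nonneg _) (hP0 k s)
    · exact le_refl 0
  have hGd0 : ∀ k, 0 ≤ Gd k := by
    intro k; simp only [hGddef]
    apply Finset.sum_nonneg
    intro s _
    split
    · exact mul_nonneg ((hq k).1 s) (abs_nonneg _)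
    · exact le_refl 0
  -- step 2 : per-k decomposition
  have hXk : ∀ k : Fin K, X k ≤ B * Bd k + Gd k := by
    intro k
    have hterm : ∀ s, q k s * δ k s ≤
        B * (if C * ρ s < P k s then 0 else q k s)
          + (if C * ρ s < P k s then q k s * |δ k s| else 0) := by
      intro s
      have hq0 := (hq k).1 s
      have habs := hδ k s
      by_cases h : C * ρ s < P k s
      · simp only [if_pos h, mul_zero, zero_add]
        exact mul_le_mul_of_nonneg_left (le_abs_self _) hq0
      · simp only [if_neg h, add_zero]
        calc q k s * δ k s ≤ q k s * B :=
              mul_le_mul_of_nonneg_left (le_trans (le_abs_self _) habs) hq0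
          _ = B * q k s := mul_comm _ _
    calc X k ≤ ∑ s, (B * (if C * ρ s < P k s then 0 else q k s)
          + (if C * ρ s < P k s then q k s * |δ k s| else 0)) :=
          Finset.sum_le_sum fun s _ => hterm s
      _ = B * Bd k + Gd k := by
          rw [Finset.sum_add_distrib, ← Finset.mul_sum]
  -- step 3 : W bound
  have hW : ∀ k : Fin K, W k ≤ K * ε ^ 2 := by
    intro k
    have hswap : W k = ∑ ℓ ∈ Finset.Iio k, ∑ s, q ℓ s * δ k s ^ 2 := by
      simp only [hWdef, hPdef]
      rw [← Finset.sum_comm]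
      apply Finset.sum_congr rfl
      intro s _
      exact Finset.sum_mul _ _ _
    rcases Nat.eq_zero_or_pos (k : ℕ) with h0 | h1
    · have hempty : Finset.Iio k = ∅ := by
        ext ℓ; simp only [Finset.mem_Iio, Finset.notMem_empty, iff_false]
        intro hlt
        have : (ℓ : ℕ) < (k : ℕ) := hlt
        omega
      rw [hswap, hempty, Finset.sum_empty]
      positivity
    · have h := havg k h1
      have hk0 : (0:ℝ) < ((k : ℕ) : ℝ) := by exact_mod_cast h1
      have h2 := mul_le_mul_of_nonneg_left h (le_of_lt hk0)
      rw [← mul_assoc, mul_one_div_cancel (ne_of_gt hk0), one_mul] at h2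
      rw [hswap]
      calc (∑ ℓ ∈ Finset.Iio k, ∑ s, q ℓ s * δ k s ^ 2) ≤ ((k:ℕ):ℝ) * ε ^ 2 := h2
        _ ≤ (K:ℝ) * ε ^ 2 := by
            apply mul_le_mul_of_nonneg_right _ (sq_nonneg ε)
            exact_mod_cast le_of_lt k.isLt
  -- step 4 : Cauchy-Schwarz per k
  have hGd : ∀ k : Fin K, Gd k ≤ Real.sqrt (A k) * (Real.sqrt K * ε) := by
    intro k
    set f : S → ℝ := fun s => if C * ρ s < P k s then q k s / Real.sqrt (P k s) else 0 with hfdef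
    set g : S → ℝ := fun s => if C * ρ s < P k s then Real.sqrt (P k s) * |δ k s| else 0 with hgdef
    have hfg : ∀ s, f s * g s = (if C * ρ s < P k s then q k s * |δ k s| else 0) := by
      intro s
      simp only [hfdef, hgdef]
      by_cases h : C * ρ s < P k s
      · simp only [if_pos h]
        have hPpos : 0 < P k s := lt_of_le_of_lt (hc0 s) h
        have hs : Real.sqrt (P k s) ≠ 0 := by positivity
        rw [← mul_assoc, div_mul_cancel₀ _ hs]
      · simp only [if_neg h, mul_zero]
    have hf2 : ∀ s, f s ^ 2 = (if C * ρ s < P k s then q k s ^ 2 / P k s else 0) := by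
      intro s
      simp only [hfdef]
      by_cases h : C * ρ s < P k s
      · simp only [if_pos h]
        have hPpos : 0 < P k s := lt_of_le_of_lt (hc0 s) h
        rw [div_pow, Real.sq_sqrt (le_of_lt hPpos)]
      · simp only [if_neg h]; ring
    have hg2 : ∀ s, g s ^ 2 ≤ P k s * δ k s ^ 2 := by
      intro s
      simp only [hgdef]
      by_cases h : C * ρ s < P k s
      · simp only [if_pos h]
        have hPpos : 0 < P k s := lt_of_le_of_lt (hc0 s) h
        rw [mul_pow, Real.sq_sqrt (le_of_lt hPpos), sq_abs]
      · simp only [if_neg h]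
        have h1 := hP0 k s
        have h2 := sq_nonneg (δ k s)
        norm_num
        positivity
    have hcs := Finset.sum_mul_sq_le_sq_mul_sq Finset.univ f g
    have hGdeq : Gd k = ∑ s, f s * g s := by
      simp only [hGddef]
      exact (Finset.sum_congr rfl fun s _ => (hfg s).symm)
    have hAeq : (∑ s, f s ^ 2) = A k := by
      simp only [hAdef]
      exact Finset.sum_congr rfl fun s _ => hf2 s
    have hgW : (∑ s, g s ^ 2) ≤ W k := by
      simp only [hWdef]
      exact Finset.sum_le_sum fun s _ => hg2 s
    have hsq : Gd k ^ 2 ≤ A k * (K * ε ^ 2) := by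
      calc Gd k ^ 2 = (∑ s, f s * g s) ^ 2 := by rw [hGdeq]
        _ ≤ (∑ s, f s ^ 2) * (∑ s, g s ^ 2) := hcs
        _ = A k * (∑ s, g s ^ 2) := by rw [hAeq]
        _ ≤ A k * W k := mul_le_mul_of_nonneg_left hgW (hA0 k)
        _ ≤ A k * (K * ε ^ 2) := mul_le_mul_of_nonneg_left (hW k) (hA0 k)
    calc Gd k = Real.sqrt (Gd k ^ 2) := (Real.sqrt_sq (hGd0 k)).symm
      _ ≤ Real.sqrt (A k * (K * ε ^ 2)) := Real.sqrt_le_sqrt hsq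
      _ = Real.sqrt (A k) * (Real.sqrt K * ε) := by
          rw [Real.sqrt_mul (hA0 k), Real.sqrt_mul (le_of_lt hKpos), Real.sqrt_sq hε]
  -- step 5 : sum of A bound
  have hAsum : ∑ k : Fin K, A k ≤ 2 * C * Real.log K := by
    have hcomm : ∑ k : Fin K, A k
        = ∑ s, ∑ k : Fin K, (if C * ρ s < P k s then q k s ^ 2 / P k s else 0) := by
      simp only [hAdef]
      exact Finset.sum_comm
    rw [hcomm]
    have hper : ∀ s ∈ Finset.univ (α := S),
        (∑ k : Fin K, (if C * ρ s < P k s then q k s ^ 2 / P k s else 0))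
          ≤ 2 * (C * ρ s) * Real.log K := by
      intro s _
      rcases eq_or_lt_of_le (hc0 s) with hc | hc
      · have hq0 : ∀ ℓ : Fin K, q ℓ s = 0 := by
          intro ℓ
          have h1 := hcover ℓ s
          have h2 := (hq ℓ).1 s
          rw [← hc] at h1
          linarith
        have hPz : ∀ k : Fin K, P k s = 0 := by
          intro k; simp only [hPdef]
          exact Finset.sum_eq_zero fun ℓ _ => hq0 ℓ
        have hzero : ∀ k : Fin K,
            (if C * ρ s < P k s then q k s ^ 2 / P k s else 0) = 0 := by
          intro k
          rw [if_neg]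
          rw [hPz k, ← hc]
          exact lt_irrefl 0
        rw [Finset.sum_eq_zero fun k _ => hzero k]
        have hlog : 0 ≤ Real.log K := Real.log_nonneg (by exact_mod_cast hK)
        rw [← hc]
        simp
      · have hconv : (∑ k : Fin K, (if C * ρ s < P k s then q k s ^ 2 / P k s else 0))
            = ∑ i ∈ Finset.range K, (if C * ρ s < ∑ j ∈ Finset.range i, vq j s
                then (vq i s) ^ 2 / (∑ j ∈ Finset.range i, vq j s) else 0) := by
          have heach : ∀ k : Fin K, (if C * ρ s < P k s then q k s ^ 2 / P k s else 0)
              = (fun i => if C * ρ s < ∑ j ∈ Finset.range i, vq j s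
                  then (vq i s) ^ 2 / (∑ j ∈ Finset.range i, vq j s) else 0) (k : ℕ) := by
            intro k
            simp only
            rw [← hPeq k s, hvq_eq k s]
          rw [Finset.sum_congr rfl fun k _ => heach k]
          exact Fin.sum_univ_eq_sum_range (fun i => if C * ρ s < ∑ j ∈ Finset.range i, vq j s
            then (vq i s) ^ 2 / (∑ j ∈ Finset.range i, vq j s) else 0) K
        rw [hconv]
        exact log_mass K hK (fun i => vq i s) (fun i => hvq0 i s) _ hc (fun i => hvqc i s)
    calc ∑ s, ∑ k : Fin K, (if C * ρ s < P k s then q k s ^ 2 / P k s else 0)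
        ≤ ∑ s, 2 * (C * ρ s) * Real.log K := Finset.sum_le_sum hper
      _ = 2 * C * Real.log K := by
          have : ∀ s, 2 * (C * ρ s) * Real.log K = (2 * C * Real.log K) * ρ s := by
            intro s; ring
          rw [Finset.sum_congr rfl fun s _ => this s, ← Finset.mul_sum, hρ.2, mul_one]
  -- step 6 : sum of Bd bound
  have hBdsum : ∑ k : Fin K, Bd k ≤ 2 * C := by
    have hcomm : ∑ k : Fin K, Bd k
        = ∑ s, ∑ k : Fin K, (if C * ρ s < P k s then 0 else q k s) := by
      simp only [hBddef]
      exact Finset.sum_comm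
    rw [hcomm]
    have hper : ∀ s ∈ Finset.univ (α := S),
        (∑ k : Fin K, (if C * ρ s < P k s then 0 else q k s)) ≤ 2 * (C * ρ s) := by
      intro s _
      have hconv : (∑ k : Fin K, (if C * ρ s < P k s then 0 else q k s))
          = ∑ i ∈ Finset.range K, (if C * ρ s < ∑ j ∈ Finset.range i, vq j s
              then 0 else vq i s) := by
        have heach : ∀ k : Fin K, (if C * ρ s < P k s then 0 else q k s)
            = (fun i => if C * ρ s < ∑ j ∈ Finset.range i, vq j s then 0 else vq i s) (k : ℕ) := by
          intro k
          simp only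
          rw [← hPeq k s, hvq_eq k s]
        rw [Finset.sum_congr rfl fun k _ => heach k]
        exact Fin.sum_univ_eq_sum_range (fun i => if C * ρ s < ∑ j ∈ Finset.range i, vq j s
          then 0 else vq i s) K
      rw [hconv]
      exact bad_mass K (fun i => vq i s) (fun i => hvq0 i s) _ (hc0 s) (fun i => hvqc i s)
    calc ∑ s, ∑ k : Fin K, (if C * ρ s < P k s then 0 else q k s)
        ≤ ∑ s, 2 * (C * ρ s) := Finset.sum_le_sum hper
      _ = 2 * C := by
          have : ∀ s, 2 * (C * ρ s) = (2 * C) * ρ s := by intro s; ring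
          rw [Finset.sum_congr rfl fun s _ => this s, ← Finset.mul_sum, hρ.2, mul_one]
  -- step 7 : sum of sqrt A
  have hsqrtA : ∑ k : Fin K, Real.sqrt (A k) ≤ Real.sqrt ((K:ℝ) * (2 * C * Real.log K)) := by
    have hcs := Finset.sum_mul_sq_le_sq_mul_sq Finset.univ (fun _ : Fin K => (1:ℝ))
      (fun k => Real.sqrt (A k))
    simp only [one_mul, one_pow] at hcs
    have h1 : (∑ _k : Fin K, (1:ℝ)) = (K:ℝ) := by
      rw [Finset.sum_const, Finset.card_univ, Fintype.card_fin, nsmul_eq_mul, mul_one]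
    have h2 : (∑ k : Fin K, Real.sqrt (A k) ^ 2) = ∑ k : Fin K, A k := by
      exact Finset.sum_congr rfl fun k _ => Real.sq_sqrt (hA0 k)
    rw [h1, h2] at hcs
    have hnn : 0 ≤ ∑ k : Fin K, Real.sqrt (A k) :=
      Finset.sum_nonneg fun k _ => Real.sqrt_nonneg _
    calc ∑ k : Fin K, Real.sqrt (A k) = Real.sqrt ((∑ k : Fin K, Real.sqrt (A k)) ^ 2) :=
          (Real.sqrt_sq hnn).symm
      _ ≤ Real.sqrt ((K:ℝ) * ∑ k : Fin K, A k) := Real.sqrt_le_sqrt hcs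
      _ ≤ Real.sqrt ((K:ℝ) * (2 * C * Real.log K)) := by
          apply Real.sqrt_le_sqrt
          exact mul_le_mul_of_nonneg_left hAsum (le_of_lt hKpos)
  -- step 8 : total sum bound
  have htotal : ∑ k : Fin K, X k ≤ 2 * C * B + (K:ℝ) * (ε * Real.sqrt (2 * C * Real.log K)) := by
    have hKK : Real.sqrt (K:ℝ) * Real.sqrt (K:ℝ) = (K:ℝ) :=
      Real.mul_self_sqrt (le_of_lt hKpos)
    calc ∑ k : Fin K, X k ≤ ∑ k : Fin K, (B * Bd k + Gd k) :=
          Finset.sum_le_sum fun k _ => hXk k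
      _ = B * (∑ k : Fin K, Bd k) + ∑ k : Fin K, Gd k := by
          rw [Finset.sum_add_distrib, ← Finset.mul_sum]
      _ ≤ B * (2 * C) + ∑ k : Fin K, Gd k := by
          have := mul_le_mul_of_nonneg_left hBdsum hB
          linarith
      _ ≤ B * (2 * C) + (∑ k : Fin K, Real.sqrt (A k)) * (Real.sqrt K * ε) := by
          have h1 : ∑ k : Fin K, Gd k ≤ ∑ k : Fin K, Real.sqrt (A k) * (Real.sqrt K * ε) :=
            Finset.sum_le_sum fun k _ => hGd k
          rw [← Finset.sum_mul] at h1
          linarith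
      _ ≤ B * (2 * C) + Real.sqrt ((K:ℝ) * (2 * C * Real.log K)) * (Real.sqrt K * ε) := by
          have h2 : (0:ℝ) ≤ Real.sqrt K * ε := mul_nonneg (Real.sqrt_nonneg _) hε
          have := mul_le_mul_of_nonneg_right hsqrtA h2
          linarith
      _ = 2 * C * B + (K:ℝ) * (ε * Real.sqrt (2 * C * Real.log K)) := by
          have h3 : Real.sqrt ((K:ℝ) * (2 * C * Real.log K)) * (Real.sqrt (K:ℝ) * ε)
              = (Real.sqrt (K:ℝ) * Real.sqrt (K:ℝ)) * (ε * Real.sqrt (2 * C * Real.log K)) := by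
            rw [Real.sqrt_mul (le_of_lt hKpos)]
            ring
          rw [h3, hKK]
          ring
  -- conclusion
  calc (⨅ k : Fin K, X k) ≤ (∑ k : Fin K, X k) / K := hinf
    _ ≤ (2 * C * B + (K:ℝ) * (ε * Real.sqrt (2 * C * Real.log K))) / K := by
        exact (div_le_div_iff_of_pos_right hKpos).mpr htotal
    _ = ε * Real.sqrt (2 * C * Real.log K) + 2 * C * B / K := by
        field_simp
        ring
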